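/- Let L be the 4-dimensional 3-Lie algebra with basis x₁,x₂,x₃,x₄ and nonzero brackets [x₁,x₃,x₄]=x₂, [x₂,x₃,x₄]=x₁, [x₁,x₂,x₄]=x₃ (all other basis brackets zero). Then A = span{x₁,x₂,x₃} is an ideal of L satisfying [A,A,A]=0 but [A,A,L] ≠ 0 (a hypo-abelian ideal), and the maximal abelian ideal of L is 0, i.e. β(L)=0, while α(L)=3. -/

import Mathlib

open Module

/-- A 3-Lie algebra structure on a vector space `L` over `F`: a trilinear,
fully alternating bracket satisfying the fundamental (generalized Jacobi) identity. -/
structure ThreeLie (F : Type*) [Field F] (L : Type*) [AddCommGroup L] [Module F L] where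
  br : L →ₗ[F] L →ₗ[F] L →ₗ[F] L
  alt₁₂ : ∀ x z : L, br x x z = 0
  alt₂₃ : ∀ x y : L, br x y y = 0
  fund : ∀ x₁ x₂ x₃ y₂ y₃ : L,
    br (br x₁ x₂ x₃) y₂ y₃ =
      br (br x₁ y₂ y₃) x₂ x₃ + br x₁ (br x₂ y₂ y₃) x₃ + br x₁ x₂ (br x₃ y₂ y₃)

namespace ThreeLie

variable {F : Type*} [Field F] {L : Type*} [AddCommGroup L] [Module F L] (T : ThreeLie F L)

/-- `I` is an ideal: `[I, L, L] ⊆ I`. -/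
def IsIdeal (I : Submodule F L) : Prop := ∀ a ∈ I, ∀ x y : L, T.br a x y ∈ I

/-- `I` is an abelian ideal: an ideal with `[I, I, L] = 0`. -/
def IsAbelianIdeal (I : Submodule F L) : Prop :=
  T.IsIdeal I ∧ ∀ a ∈ I, ∀ b ∈ I, ∀ x : L, T.br a b x = 0

/-- `A` is an abelian subalgebra: `[A, A, A] = 0`. -/
def IsAbelianSubalgebra (A : Submodule F L) : Prop :=
  ∀ a ∈ A, ∀ b ∈ A, ∀ c ∈ A, T.br a b c = 0

/-- `I` is a hypo-abelian ideal: an ideal with `[I,I,I] = 0` but `[I,I,L] ≠ 0`. -/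
def IsHypoAbelianIdeal (I : Submodule F L) : Prop :=
  T.IsIdeal I ∧ T.IsAbelianSubalgebra I ∧ ¬ (∀ a ∈ I, ∀ b ∈ I, ∀ x : L, T.br a b x = 0)

/-- The derived algebra `L¹ = [L, L, L]`. -/
def derived : Submodule F L := Submodule.span F {z | ∃ x y w : L, z = T.br x y w}

/-- The center `Z(L)`. -/
def center : Submodule F L where
  carrier := {x | ∀ y z : L, T.br x y z = 0}
  add_mem' := by
    intro a b ha hb y z
    simp [map_add, LinearMap.add_apply, ha y z, hb y z]
  zero_mem' := by intro y z; simp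
  smul_mem' := by
    intro c a ha y z
    simp [map_smul, LinearMap.smul_apply, ha y z]

/-- The lower central series. -/
def lcs : ℕ → Submodule F L
  | 0 => ⊤
  | n + 1 => Submodule.span F {z | ∃ a ∈ lcs n, ∃ x y : L, z = T.br a x y}

/-- Nilpotency. -/
def IsNilpotent : Prop := ∃ s : ℕ, T.lcs s = ⊥

end ThreeLie

namespace ThreeLie

variable {F : Type*} [Field F] {L : Type*} [AddCommGroup L] [Module F L] (T : ThreeLie F L)

lemma swap12 (a b c : L) : T.br a b c = - T.br b a c := by
  have h := T.alt₁₂ (a + b) c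
  simp only [map_add, LinearMap.add_apply, T.alt₁₂, zero_add, add_zero] at h
  rw [add_comm] at h; exact eq_neg_of_add_eq_zero_left h

lemma swap23 (a b c : L) : T.br a b c = - T.br a c b := by
  have h := T.alt₂₃ a (b + c)
  simp only [map_add, LinearMap.add_apply, T.alt₂₃, zero_add, add_zero] at h
  rw [add_comm] at h; exact eq_neg_of_add_eq_zero_left h

lemma alt₁₃ (a b : L) : T.br a b a = 0 := by
  rw [T.swap23, T.alt₁₂, neg_zero]

lemma rot (a b c : L) : T.br a b c = T.br b c a := by
  rw [T.swap12 a b c, T.swap23 b a c, neg_neg]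

end ThreeLie

private lemma coeffs4 {F : Type*} [Field F] {L : Type*} [AddCommGroup L] [Module F L]
    (x : Basis (Fin 4) F L) {c0 c1 c2 c3 : F}
    (h : c0 • x 0 + c1 • x 1 + c2 • x 2 + c3 • x 3 = 0) :
    c0 = 0 ∧ c1 = 0 ∧ c2 = 0 ∧ c3 = 0 := by
  have li := x.linearIndependent
  rw [Fintype.linearIndependent_iff] at li
  have key := li ![c0, c1, c2, c3] (by
    simpa [Fin.sum_univ_four] using h)
  exact ⟨by simpa using key 0, by simpa using key 1, by simpa using key 2, by simpa using key 3⟩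


set_option maxHeartbeats 2000000 in
/-- for the 4-dimensional 3-Lie algebra with nonzero brackets
`[x₁,x₃,x₄]=x₂`, `[x₂,x₃,x₄]=x₁`, `[x₁,x₂,x₄]=x₃` (and `[x₁,x₂,x₃]=0`),
`A = span{x₁,x₂,x₃}` is a hypo-abelian ideal, `β(L) = 0` and `α(L) = 3`. -/
theorem hypoAbelian_example {F : Type*} [Field F] {L : Type*}
    [AddCommGroup L] [Module F L] (T : ThreeLie F L) (x : Basis (Fin 4) F L)
    (h1 : T.br (x 0) (x 2) (x 3) = x 1) (h2 : T.br (x 1) (x 2) (x 3) = x 0)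
    (h3 : T.br (x 0) (x 1) (x 3) = x 2) (h4 : T.br (x 0) (x 1) (x 2) = 0) :
    T.IsHypoAbelianIdeal (Submodule.span F {x 0, x 1, x 2}) ∧
    (∀ I : Submodule F L, T.IsAbelianIdeal I → finrank F I = 0) ∧
    (∃ A : Submodule F L, T.IsAbelianSubalgebra A ∧ finrank F A = 3) ∧
    (∀ A : Submodule F L, T.IsAbelianSubalgebra A → finrank F A ≤ 3) := by
  set A : Submodule F L := Submodule.span F {x 0, x 1, x 2} with hA
  -- full bracket table on distinct basis triples
  have t013 := h3
  have t031 : T.br (x 0) (x 3) (x 1) = -x 2 := by rw [T.swap23, h3]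
  have t103 : T.br (x 1) (x 0) (x 3) = -x 2 := by rw [T.swap12, h3]
  have t130 : T.br (x 1) (x 3) (x 0) = x 2 := by rw [T.rot, T.rot, h3]
  have t301 : T.br (x 3) (x 0) (x 1) = x 2 := by rw [T.rot, h3]
  have t310 : T.br (x 3) (x 1) (x 0) = -x 2 := by rw [T.swap23, t301]
  have t023 := h1
  have t032 : T.br (x 0) (x 3) (x 2) = -x 1 := by rw [T.swap23, h1]
  have t203 : T.br (x 2) (x 0) (x 3) = -x 1 := by rw [T.swap12, h1]
  have t230 : T.br (x 2) (x 3) (x 0) = x 1 := by rw [T.rot, T.rot, h1]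
  have t302 : T.br (x 3) (x 0) (x 2) = x 1 := by rw [T.rot, h1]
  have t320 : T.br (x 3) (x 2) (x 0) = -x 1 := by rw [T.swap23, t302]
  have t123 := h2
  have t132 : T.br (x 1) (x 3) (x 2) = -x 0 := by rw [T.swap23, h2]
  have t213 : T.br (x 2) (x 1) (x 3) = -x 0 := by rw [T.swap12, h2]
  have t231 : T.br (x 2) (x 3) (x 1) = x 0 := by rw [T.rot, T.rot, h2]
  have t312 : T.br (x 3) (x 1) (x 2) = x 0 := by rw [T.rot, h2]
  have t321 : T.br (x 3) (x 2) (x 1) = -x 0 := by rw [T.swap23, t312]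
  have t012 := h4
  have t021 : T.br (x 0) (x 2) (x 1) = 0 := by rw [T.swap23, h4, neg_zero]
  have t102 : T.br (x 1) (x 0) (x 2) = 0 := by rw [T.swap12, h4, neg_zero]
  have t120 : T.br (x 1) (x 2) (x 0) = 0 := by rw [T.rot, T.rot, h4]
  have t201 : T.br (x 2) (x 0) (x 1) = 0 := by rw [T.rot, h4]
  have t210 : T.br (x 2) (x 1) (x 0) = 0 := by rw [T.swap23, t201, neg_zero]
  have hm0 : x 0 ∈ A := Submodule.subset_span (by simp)
  have hm1 : x 1 ∈ A := Submodule.subset_span (by simp)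
  have hm2 : x 2 ∈ A := Submodule.subset_span (by simp)
  -- all basis brackets land in A
  have key : ∀ i j k : Fin 4, T.br (x i) (x j) (x k) ∈ A := by
    intro i j k
    fin_cases i <;> fin_cases j <;> fin_cases k <;>
      simp [t013, t031, t103, t130, t301, t310, t023, t032, t203, t230, t302, t320,
        t123, t132, t213, t231, t312, t321, t012, t021, t102, t120, t201, t210,
        T.alt₁₂, T.alt₂₃, T.alt₁₃, hm0, hm1, hm2, Submodule.neg_mem_iff]
  -- all brackets land in A
  have keyAll : ∀ a u v : L, T.br a u v ∈ A := by
    intro a u v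
    rw [← Basis.sum_repr x a, ← Basis.sum_repr x u, ← Basis.sum_repr x v]
    simp only [map_sum, map_smul, LinearMap.sum_apply, LinearMap.smul_apply, Finset.smul_sum]
    refine Submodule.sum_mem _ fun i _ => Submodule.sum_mem _ fun j _ =>
      Submodule.sum_mem _ fun k _ => ?_
    exact Submodule.smul_mem _ _ (Submodule.smul_mem _ _ (Submodule.smul_mem _ _ (key _ _ _)))
  have hideal : T.IsIdeal A := fun a _ u v => keyAll a u v
  -- A is an abelian subalgebra
  have habelA : T.IsAbelianSubalgebra A := by
    intro a ha b hb c hc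
    rw [hA, Submodule.span_insert, Submodule.mem_sup] at ha hb hc
    obtain ⟨a1, ha1, a2, ha2, rfl⟩ := ha
    obtain ⟨b1, hb1, b2, hb2, rfl⟩ := hb
    obtain ⟨c1, hc1, c2, hc2, rfl⟩ := hc
    rw [Submodule.mem_span_singleton] at ha1 hb1 hc1
    rw [Submodule.mem_span_pair] at ha2 hb2 hc2
    obtain ⟨s, rfl⟩ := ha1; obtain ⟨p, q, rfl⟩ := ha2
    obtain ⟨s', rfl⟩ := hb1; obtain ⟨p', q', rfl⟩ := hb2
    obtain ⟨s'', rfl⟩ := hc1; obtain ⟨p'', q'', rfl⟩ := hc2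
    simp [map_add, map_smul, LinearMap.add_apply, LinearMap.smul_apply,
      t012, t021, t102, t120, t201, t210, T.alt₁₂, T.alt₂₃, T.alt₁₃]
  -- main part 1
  refine ⟨⟨hideal, habelA, ?_⟩, ?_, ⟨A, habelA, ?_⟩, ?_⟩
  · intro hcon
    have := hcon (x 0) hm0 (x 1) hm1 (x 3)
    rw [h3] at this
    exact x.ne_zero 2 this
  · -- β(L) = 0
    intro I ⟨hIid, hIab⟩
    have hbot : I = ⊥ := by
      rw [Submodule.eq_bot_iff]
      intro a ha
      obtain ⟨c0, c1, c2, c3, haeq⟩ : ∃ c0 c1 c2 c3 : F,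
          a = c0 • x 0 + c1 • x 1 + c2 • x 2 + c3 • x 3 :=
        ⟨_, _, _, _, by
          have h := (Basis.sum_repr x a).symm
          rw [Fin.sum_univ_four] at h
          exact h⟩
      have hB01 : T.br a (x 0) (x 1) = c3 • x 2 := by
        conv_lhs => rw [haeq]
        simp only [map_add, map_smul, LinearMap.add_apply, LinearMap.smul_apply,
          T.alt₁₂, T.alt₁₃, t201, t301, smul_zero, zero_add, add_zero]
      have hB12 : T.br a (x 1) (x 2) = c3 • x 0 := by
        conv_lhs => rw [haeq]
        simp only [map_add, map_smul, LinearMap.add_apply, LinearMap.smul_apply,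
          T.alt₁₂, T.alt₂₃, T.alt₁₃, t012, t312, smul_zero, zero_add, add_zero]
      have hB03 : T.br a (x 0) (x 3) = -(c1 • x 2) - c2 • x 1 := by
        conv_lhs => rw [haeq]
        simp only [map_add, map_smul, LinearMap.add_apply, LinearMap.smul_apply,
          T.alt₁₂, T.alt₁₃, t103, t203, smul_zero, zero_add, add_zero]
        module
      have hB13 : T.br a (x 1) (x 3) = c0 • x 2 - c2 • x 0 := by
        conv_lhs => rw [haeq]
        simp only [map_add, map_smul, LinearMap.add_apply, LinearMap.smul_apply,
          T.alt₁₂, T.alt₁₃, t013, t213, smul_zero, zero_add, add_zero]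
        module
      have hB23 : T.br a (x 2) (x 3) = c0 • x 1 + c1 • x 0 := by
        conv_lhs => rw [haeq]
        simp only [map_add, map_smul, LinearMap.add_apply, LinearMap.smul_apply,
          T.alt₁₂, T.alt₁₃, t023, t123, smul_zero, zero_add, add_zero]
      -- equation A : c3 = 0
      have zA : T.br a (T.br a (x 1) (x 2)) (x 1) = 0 :=
        hIab a ha _ (hIid a ha _ _) _
      rw [hB12] at zA
      simp only [map_smul, LinearMap.smul_apply, hB01, smul_smul] at zA
      have hc3 : c3 = 0 := by
        rcases smul_eq_zero.mp zA with h | h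
        · exact mul_self_eq_zero.mp h
        · exact absurd h (x.ne_zero 2)
      -- equation B
      have zB : T.br a (T.br a (x 2) (x 3)) (x 3) = 0 :=
        hIab a ha _ (hIid a ha _ _) _
      rw [hB23] at zB
      simp only [map_add, map_smul, LinearMap.add_apply, LinearMap.smul_apply,
        hB13, hB03] at zB
      have zB' : (-(c0 * c2)) • x 0 + (-(c1 * c2)) • x 1 + (c0 * c0 - c1 * c1) • x 2
          + (0 : F) • x 3 = 0 := by
        rw [← zB]; module
      obtain ⟨e1, e2, e3, -⟩ := coeffs4 x zB'
      -- equation C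
      have zC : T.br a (T.br a (x 1) (x 3)) (x 3) = 0 :=
        hIab a ha _ (hIid a ha _ _) _
      rw [hB13] at zC
      simp only [map_add, map_sub, map_smul, LinearMap.add_apply, LinearMap.sub_apply,
        LinearMap.smul_apply, hB23, hB03] at zC
      have zC' : (c0 * c1) • x 0 + (c0 * c0 + c2 * c2) • x 1 + (c1 * c2) • x 2
          + (0 : F) • x 3 = 0 := by
        rw [← zC]; module
      obtain ⟨f1, f2, -, -⟩ := coeffs4 x zC'
      -- solve the scalar equations
      have hc0 : c0 = 0 := by
        by_contra h
        have hc1' : c1 = 0 := by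
          rcases mul_eq_zero.mp f1 with h' | h'
          · exact absurd h' h
          · exact h'
        rw [hc1', mul_zero, sub_zero] at e3
        exact h (mul_self_eq_zero.mp e3)
      have hc1 : c1 = 0 := by
        rw [hc0, mul_zero, zero_sub, neg_eq_zero] at e3
        exact mul_self_eq_zero.mp e3
      have hc2 : c2 = 0 := by
        rw [hc0, mul_zero, zero_add] at f2
        exact mul_self_eq_zero.mp f2
      rw [haeq, hc0, hc1, hc2, hc3]
      simp
    rw [hbot]
    exact finrank_bot F L
  · -- finrank A = 3
    have li : LinearIndependent F (x ∘ (![0, 1, 2] : Fin 3 → Fin 4)) :=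
      x.linearIndependent.comp _ (by decide)
    have hr : Set.range (x ∘ (![0, 1, 2] : Fin 3 → Fin 4)) = {x 0, x 1, x 2} := by
      ext v
      constructor
      · rintro ⟨i, rfl⟩
        fin_cases i <;> simp
      · rintro (rfl | rfl | rfl)
        · exact ⟨0, rfl⟩
        · exact ⟨1, rfl⟩
        · exact ⟨2, rfl⟩
    have := finrank_span_eq_card li
    rw [hr] at this
    rw [hA, this]
    simp
  · -- finrank ≤ 3
    intro B hB
    have : FiniteDimensional F L := Module.Finite.of_basis x
    have hL : finrank F L = 4 := by
      rw [finrank_eq_card_basis x]; simp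
    have hle : finrank F B ≤ 4 := hL ▸ Submodule.finrank_le B
    rcases lt_or_eq_of_le hle with h | h
    · omega
    · exfalso
      have htop : B = ⊤ := Submodule.eq_top_of_finrank_eq (by rw [h, hL])
      have := hB (x 0) (htop ▸ Submodule.mem_top) (x 1) (htop ▸ Submodule.mem_top)
        (x 3) (htop ▸ Submodule.mem_top)
      rw [h3] at this
      exact x.ne_zero 2 this
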